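/- The wedge product of Reed-Muller codes satisfies RM(r,m) ∧ RM(r',m) = RM(r+r',m), where the wedge of two codes is the span of entrywise products of their codewords, assuming r + r' ≤ m. -/
import Mathlib

/-- The Reed-Muller code `RM(r,m)`: the subspace of `𝔽₂^(2^m)` (functions on `𝔽₂^m`)
spanned by evaluation vectors of polynomials of total degree at most `r`. -/
def RM (r m : ℕ) : Submodule (ZMod 2) ((Fin m → ZMod 2) → ZMod 2) :=
  Submodule.span (ZMod 2)
    {v | ∃ f : MvPolynomial (Fin m) (ZMod 2),
      f.totalDegree ≤ r ∧ v = fun x => MvPolynomial.eval x f}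

/-- The wedge product of two codes: the span of entrywise products of codewords. -/
def codeWedge {ι : Type*} (V W : Submodule (ZMod 2) (ι → ZMod 2)) :
    Submodule (ZMod 2) (ι → ZMod 2) :=
  Submodule.span (ZMod 2) {u | ∃ v ∈ V, ∃ w ∈ W, u = v * w}

lemma finsupp_split {ι : Type*} (r r' : ℕ) (a : ι →₀ ℕ)
    (h : (a.sum fun _ n => n) ≤ r + r') :
    ∃ b c : ι →₀ ℕ, a = b + c ∧ (b.sum fun _ n => n) ≤ r ∧ (c.sum fun _ n => n) ≤ r' := by
  induction r generalizing a with
  | zero =>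
    exact ⟨0, a, (zero_add a).symm, by simp, by simpa using h⟩
  | succ r IH =>
    by_cases h' : (a.sum fun _ n => n) ≤ r + r'
    · obtain ⟨b, c, hbc, h1, h2⟩ := IH a h'
      exact ⟨b, c, hbc, h1.trans (Nat.le_succ r), h2⟩
    · have ha : a ≠ 0 := by
        rintro rfl
        simp at h'
      obtain ⟨x, hx⟩ : ∃ x, a x ≠ 0 := by
        by_contra hc
        push_neg at hc
        exact ha (Finsupp.ext fun y => hc y)
      set a' : ι →₀ ℕ := a - Finsupp.single x 1 with ha'
      have key : a = a' + Finsupp.single x 1 := by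
        ext y
        by_cases hy : x = y
        · subst hy
          simp only [ha', Finsupp.add_apply, Finsupp.tsub_apply, Finsupp.single_eq_same]
          omega
        · simp [ha', Finsupp.single_apply, hy]
      have hsum : (a.sum fun _ n => n) = (a'.sum fun _ n => n) + 1 := by
        rw [key, Finsupp.sum_add_index' (fun _ => rfl) (fun _ _ _ => rfl)]
        simp
      obtain ⟨b, c, hbc, h1, h2⟩ := IH a' (by omega)
      refine ⟨b + Finsupp.single x 1, c, ?_, ?_, h2⟩
      · rw [key, hbc]; exact add_right_comm b c _
      · rw [Finsupp.sum_add_index' (fun _ => rfl) (fun _ _ _ => rfl)]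
        simp only [Finsupp.sum_single_index]
        omega

lemma eval_mem_RM (r m : ℕ) (f : MvPolynomial (Fin m) (ZMod 2))
    (hf : f.totalDegree ≤ r) : (fun x => MvPolynomial.eval x f) ∈ RM r m :=
  Submodule.subset_span ⟨f, hf, rfl⟩

theorem RM_wedge (r r' m : ℕ) (h : r + r' ≤ m) :
    codeWedge (RM r m) (RM r' m) = RM (r + r') m := by
  apply le_antisymm
  · -- codeWedge ≤ RM (r+r')
    rw [codeWedge]
    apply Submodule.span_le.2
    rintro u ⟨v, hv, w, hw, rfl⟩
    -- reduce to generators via span induction on v and w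
    have key : ∀ v ∈ RM r m, ∀ w ∈ RM r' m, v * w ∈ RM (r + r') m := by
      intro v hv
      refine Submodule.span_induction ?_ ?_ ?_ ?_ hv
      · rintro v ⟨f, hf, rfl⟩ w hw
        refine Submodule.span_induction ?_ ?_ ?_ ?_ hw
        · rintro w ⟨g, hg, rfl⟩
          have : ((fun x => MvPolynomial.eval x f) * fun x => MvPolynomial.eval x g)
              = fun x => MvPolynomial.eval x (f * g) := by
            funext x; simp
          rw [this]
          exact eval_mem_RM _ _ _
            ((MvPolynomial.totalDegree_mul f g).trans (add_le_add hf hg))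
        · simp
        · intro a b _ _ ha hb
          have : (fun x => MvPolynomial.eval x f) * (a + b)
              = (fun x => MvPolynomial.eval x f) * a + (fun x => MvPolynomial.eval x f) * b := by
            ring
          rw [this]; exact Submodule.add_mem _ ha hb
        · intro c a _ ha
          have : (fun x => MvPolynomial.eval x f) * (c • a)
              = c • ((fun x => MvPolynomial.eval x f) * a) := by
            funext x; simp [mul_comm, mul_assoc, mul_left_comm]
          rw [this]; exact Submodule.smul_mem _ _ ha
      · intro w _; simp
      · intro a b _ _ ha hb w hw
        have : (a + b) * w = a * w + b * w := by ring
        rw [this]; exact Submodule.add_mem _ (ha w hw) (hb w hw)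
      · intro c a _ ha w hw
        have : (c • a) * w = c • (a * w) := by
          funext x; simp [mul_comm, mul_assoc, mul_left_comm]
        rw [this]; exact Submodule.smul_mem _ _ (ha w hw)
    exact key v hv w hw
  · -- RM (r+r') ≤ codeWedge
    rw [RM]
    apply Submodule.span_le.2
    rintro u ⟨f, hf, rfl⟩
    have hrepr : (fun x => MvPolynomial.eval x f)
        = ∑ a ∈ f.support, fun x => MvPolynomial.eval x
            (MvPolynomial.monomial a (MvPolynomial.coeff a f)) := by
      funext x
      rw [Finset.sum_apply]
      rw [← map_sum (MvPolynomial.eval x) _ f.support]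
      rw [MvPolynomial.support_sum_monomial_coeff]
    rw [hrepr]
    apply Submodule.sum_mem
    intro a ha
    have hdeg : (a.sum fun _ n => n) ≤ r + r' := by
      refine le_trans ?_ hf
      exact MvPolynomial.le_totalDegree ha
    obtain ⟨b, c, hbc, hb, hc⟩ := finsupp_split r r' a hdeg
    have hm : MvPolynomial.monomial a (MvPolynomial.coeff a f)
        = MvPolynomial.monomial b (MvPolynomial.coeff a f) * MvPolynomial.monomial c 1 := by
      rw [MvPolynomial.monomial_mul, mul_one, hbc]
    apply Submodule.subset_span
    refine ⟨fun x => MvPolynomial.eval x (MvPolynomial.monomial b (MvPolynomial.coeff a f)),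
      eval_mem_RM _ _ _ ?_,
      fun x => MvPolynomial.eval x (MvPolynomial.monomial c 1),
      eval_mem_RM _ _ _ ?_, ?_⟩
    · exact le_trans (MvPolynomial.totalDegree_monomial_le _ _) hb
    · exact le_trans (MvPolynomial.totalDegree_monomial_le _ _) hc
    · funext x; rw [hm, map_mul]; rfl
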